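/- Let n ≥ 1. Let A, B, C, D be Hadamard matrices of dimension n, let (H^d)_{d∈[n]} and (K^c)_{c∈[n]} be n-controlled families of Hadamard matrices of dimension n, and let Q and P be quantum Latin squares of dimension n. For a, b, c, d ∈ [n], define the matrix U_{(a,b,c,d)} with rows and columns indexed by [n]×[n], whose entry at row (e,f) and column (g,h) is (1/n) · ∑_{r,s∈[n]} A_{f,h} · B_{s,f} · C_{r,h} · D_{s,r} · H^d_{a,s} · K^c_{b,r} · Q_{d,s,e} · P_{r,c,g}. Then (U_{(a,b,c,d)})_{(a,b,c,d)∈[n]⁴} is a unitary error basis of dimension n². -/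

import Mathlib

open scoped ComplexConjugate Matrix

noncomputable section

/-- A (possibly rectangularly-indexed) complex Hadamard matrix: all entries have
modulus 1, and distinct rows are orthogonal, with `∑ k, H i k * conj (H j k) = n·δ_{i,j}`
where `n` is the dimension (the common cardinality of the row and column index sets). -/
def IsHadamard {R C : Type*} [Fintype R] [Fintype C] [DecidableEq R]
    (H : Matrix R C ℂ) : Prop :=
  Fintype.card R = Fintype.card C ∧
  (∀ i j, ‖H i j‖ = 1) ∧
  (∀ i j, ∑ k, H i k * conj (H j k) = if i = j then (Fintype.card R : ℂ) else 0)

/-- A quantum Latin square of dimension `n`: an `n × n` grid (rows and columns indexed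
by `A`, with `|A| = n`) of vectors in `ℂ^n` (coordinates indexed by `X`, `|X| = n`),
such that every row and every column is an orthonormal basis. -/
def IsQLS {A X : Type*} [Fintype A] [Fintype X] [DecidableEq A]
    (Q : A → A → X → ℂ) : Prop :=
  Fintype.card X = Fintype.card A ∧
  (∀ a b c, ∑ i, conj (Q a b i) * Q a c i = if b = c then 1 else 0) ∧
  (∀ a b c, ∑ i, conj (Q a c i) * Q b c i = if a = b then 1 else 0)

/-- A unitary error basis of dimension `n`: a family of `n²` unitary matrices
(rows indexed by `R`, columns by `C`, both of cardinality `n`; elements indexed by `A`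
with `|A| = n²`) that are orthogonal with respect to the trace inner product:
`Tr(U_a† U_b) = n·δ_{a,b}`. -/
def IsUEB {A R C : Type*} [Fintype A] [Fintype R] [Fintype C]
    [DecidableEq A] [DecidableEq R] [DecidableEq C]
    (U : A → Matrix R C ℂ) : Prop :=
  Fintype.card A = (Fintype.card R) ^ 2 ∧
  (∀ a, U a * (U a)ᴴ = 1 ∧ (U a)ᴴ * U a = 1) ∧
  (∀ a b, Matrix.trace ((U a)ᴴ * U b) = if a = b then (Fintype.card R : ℂ) else 0)


lemma mul_conj_self_one (z : ℂ) (hz : ‖z‖ = 1) : z * conj z = 1 := by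
  rw [Complex.mul_conj, ← Complex.sq_norm, hz]; norm_num

lemma conj_mul_self_one (z : ℂ) (hz : ‖z‖ = 1) : conj z * z = 1 := by
  rw [mul_comm]; exact mul_conj_self_one z hz

lemma conj_sum_pair {ι : Type*} [Fintype ι] (u w : ι → ℂ) (v : ℂ) (hv : conj v = v)
    (h : ∑ k, u k * conj (w k) = v) : ∑ k, conj (u k) * w k = v := by
  have h2 := congrArg (starRingEnd ℂ) h
  simp only [map_sum, map_mul, Complex.conj_conj, hv] at h2
  exact h2

lemma conj_sum_pair' {ι : Type*} [Fintype ι] (u w : ι → ℂ) (v : ℂ) (hv : conj v = v)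
    (h : ∑ k, conj (u k) * w k = v) : ∑ k, u k * conj (w k) = v := by
  have h2 := congrArg (starRingEnd ℂ) h
  simp only [map_sum, map_mul, Complex.conj_conj, hv] at h2
  simpa [mul_comm] using h2

lemma flip_orth {m : ℕ} (M : Matrix (Fin m) (Fin m) ℂ) (c : ℂ) (hc : c ≠ 0)
    (h : ∀ i j, ∑ k, M i k * conj (M j k) = if i = j then c else 0) :
    ∀ i j, ∑ k, conj (M k i) * M k j = if i = j then c else 0 := by
  have h1 : M * (c⁻¹ • Mᴴ) = 1 := by
    ext i j
    simp only [Matrix.mul_apply, Matrix.smul_apply, Matrix.conjTranspose_apply, smul_eq_mul,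
      Complex.star_def]
    rw [show (∑ k, M i k * (c⁻¹ * conj (M j k))) = c⁻¹ * ∑ k, M i k * conj (M j k) by
      rw [Finset.mul_sum]; exact Finset.sum_congr rfl fun k _ => by ring, h i j]
    by_cases hij : i = j <;> simp [hij, Matrix.one_apply, inv_mul_cancel₀ hc]
  have h2 := mul_eq_one_comm.mp h1
  intro i j
  have h3 := congrFun (congrFun h2 i) j
  simp only [Matrix.mul_apply, Matrix.smul_apply, Matrix.conjTranspose_apply, smul_eq_mul,
    Matrix.one_apply, Complex.star_def] at h3
  have h4 : c * ∑ k, c⁻¹ * conj (M k i) * M k j = c * (if i = j then 1 else 0) := by rw [h3]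
  rw [Finset.mul_sum] at h4
  calc ∑ k, conj (M k i) * M k j = ∑ k, c * (c⁻¹ * conj (M k i) * M k j) := by
        refine Finset.sum_congr rfl fun k _ => ?_
        field_simp
      _ = if i = j then c else 0 := by rw [h4]; by_cases hij : i = j <;> simp [hij]

lemma scongr {m : ℕ} {F G : Fin m → ℂ} (h : ∀ a, F a = G a) : (∑ a, F a) = ∑ a, G a :=
  Finset.sum_congr rfl fun a _ => h a

lemma sum_mul_pair {m : ℕ} (p w : ℂ) (u v : Fin m → ℂ) (h : (∑ x, u x * v x) = w) :
    (∑ x, p * (u x * v x)) = p * w := by rw [← Finset.mul_sum, h]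

section Swaps
variable {M : Type*} [AddCommMonoid M] {n : ℕ}

lemma sw1 (F : Fin n → Fin n → M) : (∑ a, ∑ b, F a b) = ∑ b, ∑ a, F a b := Finset.sum_comm

lemma sw2 (F : Fin n → Fin n → Fin n → M) :
    (∑ a, ∑ b, ∑ c, F a b c) = ∑ a, ∑ c, ∑ b, F a b c :=
  Finset.sum_congr rfl fun _ _ => Finset.sum_comm

lemma sw3 (F : Fin n → Fin n → Fin n → Fin n → M) :
    (∑ a, ∑ b, ∑ c, ∑ d, F a b c d) = ∑ a, ∑ b, ∑ d, ∑ c, F a b c d :=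
  Finset.sum_congr rfl fun _ _ => sw2 _

lemma sw4 (F : Fin n → Fin n → Fin n → Fin n → Fin n → M) :
    (∑ a, ∑ b, ∑ c, ∑ d, ∑ e, F a b c d e) = ∑ a, ∑ b, ∑ c, ∑ e, ∑ d, F a b c d e :=
  Finset.sum_congr rfl fun _ _ => sw3 _

lemma sw5 (F : Fin n → Fin n → Fin n → Fin n → Fin n → Fin n → M) :
    (∑ a, ∑ b, ∑ c, ∑ d, ∑ e, ∑ f, F a b c d e f) =
    ∑ a, ∑ b, ∑ c, ∑ d, ∑ f, ∑ e, F a b c d e f :=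
  Finset.sum_congr rfl fun _ _ => sw4 _

lemma sw6 (F : Fin n → Fin n → Fin n → Fin n → Fin n → Fin n → Fin n → M) :
    (∑ a, ∑ b, ∑ c, ∑ d, ∑ e, ∑ f, ∑ g, F a b c d e f g) =
    ∑ a, ∑ b, ∑ c, ∑ d, ∑ e, ∑ g, ∑ f, F a b c d e f g :=
  Finset.sum_congr rfl fun _ _ => sw5 _

lemma sw7 (F : Fin n → Fin n → Fin n → Fin n → Fin n → Fin n → Fin n → Fin n → M) :
    (∑ a, ∑ b, ∑ c, ∑ d, ∑ e, ∑ f, ∑ g, ∑ h, F a b c d e f g h) =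
    ∑ a, ∑ b, ∑ c, ∑ d, ∑ e, ∑ f, ∑ h, ∑ g, F a b c d e f g h :=
  Finset.sum_congr rfl fun _ _ => sw6 _

/-- reorder `[g,h,r',s',r,s] → [s,s',r,h,r',g]` -/
lemma reorder6 (F : Fin n → Fin n → Fin n → Fin n → Fin n → Fin n → M) :
    (∑ g, ∑ h, ∑ r', ∑ s', ∑ r, ∑ s, F g h r' s' r s) =
    ∑ s, ∑ s', ∑ r, ∑ h, ∑ r', ∑ g, F g h r' s' r s := by
  rw [sw5, sw4, sw3, sw2, sw1, sw4, sw3, sw2, sw5, sw4, sw3, sw4, sw5]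

/-- reorder `[g,h,e,f,r',s',r,s] → [s,r,g,e,r',h,s',f]` -/
lemma reorder8 (F : Fin n → Fin n → Fin n → Fin n → Fin n → Fin n → Fin n → Fin n → M) :
    (∑ g, ∑ h, ∑ e, ∑ f, ∑ r', ∑ s', ∑ r, ∑ s, F g h e f r' s' r s) =
    ∑ s, ∑ r, ∑ g, ∑ e, ∑ r', ∑ h, ∑ s', ∑ f, F g h e f r' s' r s := by
  rw [sw7, sw6, sw5, sw4, sw3, sw2, sw1, sw7, sw6, sw5, sw4, sw3, sw2, sw4, sw6, sw5, sw7]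

end Swaps

/-- four n-dimensional Hadamard matrices, two n-controlled families of
n-dimensional Hadamard matrices, and two n-dimensional quantum Latin squares produce
an n²-dimensional UEB whose entry at row (e,f) and column (g,h) is
`(1/n) · ∑_{r,s} A_{f,h} · B_{s,f} · C_{r,h} · D_{s,r} · H^d_{a,s} · K^c_{b,r} · Q_{d,s,e} · P_{r,c,g}`. -/
theorem eight_ary_ueb (n : ℕ) (hn : 1 ≤ n)
    (A B C D : Matrix (Fin n) (Fin n) ℂ)
    (H K : Fin n → Matrix (Fin n) (Fin n) ℂ)
    (Q P : Fin n → Fin n → Fin n → ℂ)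
    (hA : IsHadamard A) (hB : IsHadamard B) (hC : IsHadamard C) (hD : IsHadamard D)
    (hH : ∀ d, IsHadamard (H d)) (hK : ∀ c, IsHadamard (K c))
    (hQ : IsQLS Q) (hP : IsQLS P) :
    IsUEB (fun abcd : Fin n × Fin n × Fin n × Fin n =>
      Matrix.of fun (ef gh : Fin n × Fin n) =>
        ((n : ℂ))⁻¹ * ∑ r : Fin n, ∑ s : Fin n,
          A ef.2 gh.2 * B s ef.2 * C r gh.2 * D s r *
            H abcd.2.2.2 abcd.1 s * K abcd.2.2.1 abcd.2.1 r *
            Q abcd.2.2.2 s ef.1 * P r abcd.2.2.1 gh.1) := by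
  have hn0 : (n : ℂ) ≠ 0 := Nat.cast_ne_zero.mpr (by omega)
  have hite : ∀ (pq : Prop) [Decidable pq] (v : ℂ),
      conj v = v → conj (if pq then v else 0) = if pq then v else 0 := by
    intro pq _ v hv; split_ifs <;> simp [hv]
  have hArow : ∀ i j, ∑ k, A i k * conj (A j k) = if i = j then (n:ℂ) else 0 := by
    intro i j; simpa using hA.2.2 i j
  have hDrow : ∀ i j, ∑ k, D i k * conj (D j k) = if i = j then (n:ℂ) else 0 := by
    intro i j; simpa using hD.2.2 i j
  have hBrowc : ∀ i j, ∑ k, conj (B i k) * B j k = if i = j then (n:ℂ) else 0 := fun i j =>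
    conj_sum_pair _ _ _ (hite _ _ (by simp)) (by simpa using hB.2.2 i j)
  have hCrowc : ∀ i j, ∑ k, conj (C i k) * C j k = if i = j then (n:ℂ) else 0 := fun i j =>
    conj_sum_pair _ _ _ (hite _ _ (by simp)) (by simpa using hC.2.2 i j)
  have hHrowc : ∀ dd i j, ∑ k, conj (H dd i k) * H dd j k = if i = j then (n:ℂ) else 0 :=
    fun dd i j => conj_sum_pair _ _ _ (hite _ _ (by simp)) (by simpa using (hH dd).2.2 i j)
  have hKrowc : ∀ cc i j, ∑ k, conj (K cc i k) * K cc j k = if i = j then (n:ℂ) else 0 :=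
    fun cc i j => conj_sum_pair _ _ _ (hite _ _ (by simp)) (by simpa using (hK cc).2.2 i j)
  have hPcol : ∀ cc i j, ∑ g, P i cc g * conj (P j cc g) = if i = j then (1:ℂ) else 0 :=
    fun cc i j => conj_sum_pair' _ _ _ (hite _ _ (by simp)) (hP.2.2 i j cc)
  have hQflip : ∀ dd i j, ∑ s, Q dd s i * conj (Q dd s j) = if i = j then (1:ℂ) else 0 := by
    intro dd i j
    have hrow : ∀ i j, ∑ k, (fun s e => Q dd s e) i k * conj ((fun s e => Q dd s e) j k)
        = if i = j then (1:ℂ) else 0 := fun i j =>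
      conj_sum_pair' _ _ _ (hite _ _ (by simp)) (hQ.2.1 dd i j)
    exact conj_sum_pair' _ _ _ (hite _ _ (by simp))
      (flip_orth (fun s e => Q dd s e) 1 one_ne_zero hrow i j)
  have hAAc : ∀ i j, conj (A i j) * A i j = 1 := fun i j => conj_mul_self_one _ (hA.2.1 i j)
  have hDDc : ∀ i j, conj (D i j) * D i j = 1 := fun i j => conj_mul_self_one _ (hD.2.1 i j)
  have hBB : ∀ i j, B i j * conj (B i j) = 1 := fun i j => mul_conj_self_one _ (hB.2.1 i j)
  have hCC : ∀ i j, C i j * conj (C i j) = 1 := fun i j => mul_conj_self_one _ (hC.2.1 i j)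
  have hHH : ∀ dd i j, H dd i j * conj (H dd i j) = 1 :=
    fun dd i j => mul_conj_self_one _ ((hH dd).2.1 i j)
  have hKK : ∀ cc i j, K cc i j * conj (K cc i j) = 1 :=
    fun cc i j => mul_conj_self_one _ ((hK cc).2.1 i j)
  refine ⟨by simp [Fintype.card_prod, Fintype.card_fin]; ring, fun x => ?_, fun x y => ?_⟩
  · obtain ⟨a, b, c, d⟩ := x
    have huu : (Matrix.of fun (ef gh : Fin n × Fin n) =>
        ((n : ℂ))⁻¹ * ∑ r : Fin n, ∑ s : Fin n,
          A ef.2 gh.2 * B s ef.2 * C r gh.2 * D s r *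
            H d a s * K c b r * Q d s ef.1 * P r c gh.1) *
        (Matrix.of fun (ef gh : Fin n × Fin n) =>
        ((n : ℂ))⁻¹ * ∑ r : Fin n, ∑ s : Fin n,
          A ef.2 gh.2 * B s ef.2 * C r gh.2 * D s r *
            H d a s * K c b r * Q d s ef.1 * P r c gh.1)ᴴ = 1 := by
      ext ⟨e1, f1⟩ ⟨e2, f2⟩
      rw [Matrix.mul_apply]
      simp only [Matrix.conjTranspose_apply, Matrix.of_apply, Matrix.one_apply,
        Complex.star_def]
      rw [Fintype.sum_prod_type]
      simp only [map_mul, map_sum, map_inv₀, map_natCast]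
      simp only [Finset.mul_sum, Finset.sum_mul]
      rw [reorder6]
      trans (∑ s : Fin n, ∑ s' : Fin n, ∑ r : Fin n, ∑ h' : Fin n, ∑ r' : Fin n, ∑ g : Fin n,
        ((n:ℂ)⁻¹ * (n:ℂ)⁻¹ * (B s f1 * conj (B s' f2) * (D s r * conj (D s' r')) *
          (H d a s * conj (H d a s')) * (Q d s e1 * conj (Q d s' e2)) *
          (A f1 h' * conj (A f2 h')) * (C r h' * conj (C r' h')) *
          (K c b r * conj (K c b r')))) * (P r c g * conj (P r' c g)))
      · exact scongr fun s => scongr fun s' => scongr fun r => scongr fun h' =>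
          scongr fun r' => scongr fun g => by ring
      calc (∑ s : Fin n, ∑ s' : Fin n, ∑ r : Fin n, ∑ h' : Fin n, ∑ r' : Fin n, ∑ g : Fin n,
            ((n:ℂ)⁻¹ * (n:ℂ)⁻¹ * (B s f1 * conj (B s' f2) * (D s r * conj (D s' r')) *
              (H d a s * conj (H d a s')) * (Q d s e1 * conj (Q d s' e2)) *
              (A f1 h' * conj (A f2 h')) * (C r h' * conj (C r' h')) *
              (K c b r * conj (K c b r')))) * (P r c g * conj (P r' c g)))
          = ∑ s : Fin n, ∑ s' : Fin n, ∑ r : Fin n, ∑ h' : Fin n, ∑ r' : Fin n,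
            ((n:ℂ)⁻¹ * (n:ℂ)⁻¹ * (B s f1 * conj (B s' f2) * (D s r * conj (D s' r')) *
              (H d a s * conj (H d a s')) * (Q d s e1 * conj (Q d s' e2)) *
              (A f1 h' * conj (A f2 h')) * (C r h' * conj (C r' h')) *
              (K c b r * conj (K c b r')))) * (if r = r' then (1:ℂ) else 0) :=
          scongr fun s => scongr fun s' => scongr fun r => scongr fun h' => scongr fun r' =>
            sum_mul_pair _ _ _ _ (hPcol c r r')
        _ = ∑ s : Fin n, ∑ s' : Fin n, ∑ r : Fin n, ∑ h' : Fin n,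
            ((n:ℂ)⁻¹ * (n:ℂ)⁻¹ * (B s f1 * conj (B s' f2) * (D s r * conj (D s' r)) *
              (H d a s * conj (H d a s')) * (Q d s e1 * conj (Q d s' e2)) *
              (A f1 h' * conj (A f2 h')) * (C r h' * conj (C r h')) *
              (K c b r * conj (K c b r)))) :=
          scongr fun s => scongr fun s' => scongr fun r => scongr fun h' => by
            simp only [mul_ite, mul_one, mul_zero, Finset.sum_ite_eq, Finset.mem_univ, if_true]
        _ = ∑ s : Fin n, ∑ s' : Fin n, ∑ r : Fin n, ∑ h' : Fin n,
            ((n:ℂ)⁻¹ * (n:ℂ)⁻¹ * (B s f1 * conj (B s' f2) * (D s r * conj (D s' r)) *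
              (H d a s * conj (H d a s')) * (Q d s e1 * conj (Q d s' e2)))) *
              (A f1 h' * conj (A f2 h')) :=
          scongr fun s => scongr fun s' => scongr fun r => scongr fun h' => by
            rw [hCC r h', hKK c b r]; ring
        _ = ∑ s : Fin n, ∑ s' : Fin n, ∑ r : Fin n,
            ((n:ℂ)⁻¹ * (n:ℂ)⁻¹ * (B s f1 * conj (B s' f2) * (D s r * conj (D s' r)) *
              (H d a s * conj (H d a s')) * (Q d s e1 * conj (Q d s' e2)))) *
              (if f1 = f2 then (n:ℂ) else 0) :=
          scongr fun s => scongr fun s' => scongr fun r =>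
            sum_mul_pair _ _ _ _ (hArow f1 f2)
        _ = ∑ s : Fin n, ∑ s' : Fin n, ∑ r : Fin n,
            ((n:ℂ)⁻¹ * (n:ℂ)⁻¹ * (B s f1 * conj (B s' f2)) *
              (H d a s * conj (H d a s')) * (Q d s e1 * conj (Q d s' e2)) *
              (if f1 = f2 then (n:ℂ) else 0)) * (D s r * conj (D s' r)) :=
          scongr fun s => scongr fun s' => scongr fun r => by ring
        _ = ∑ s : Fin n, ∑ s' : Fin n,
            ((n:ℂ)⁻¹ * (n:ℂ)⁻¹ * (B s f1 * conj (B s' f2)) *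
              (H d a s * conj (H d a s')) * (Q d s e1 * conj (Q d s' e2)) *
              (if f1 = f2 then (n:ℂ) else 0)) * (if s = s' then (n:ℂ) else 0) :=
          scongr fun s => scongr fun s' => sum_mul_pair _ _ _ _ (hDrow s s')
        _ = ∑ s : Fin n,
            ((n:ℂ)⁻¹ * (n:ℂ)⁻¹ * (B s f1 * conj (B s f2)) *
              (H d a s * conj (H d a s)) * (Q d s e1 * conj (Q d s e2)) *
              (if f1 = f2 then (n:ℂ) else 0)) * (n:ℂ) :=
          scongr fun s => by
            simp only [mul_ite, mul_one, mul_zero, Finset.sum_ite_eq, Finset.mem_univ, if_true]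
        _ = if (e1, f1) = (e2, f2) then 1 else 0 := by
          by_cases hf : f1 = f2
          · subst hf
            have hc1 : (n:ℂ)⁻¹ * (n:ℂ)⁻¹ * (n:ℂ) * (n:ℂ) = 1 := by field_simp
            calc (∑ s : Fin n,
                ((n:ℂ)⁻¹ * (n:ℂ)⁻¹ * (B s f1 * conj (B s f1)) *
                  (H d a s * conj (H d a s)) * (Q d s e1 * conj (Q d s e2)) *
                  (if f1 = f1 then (n:ℂ) else 0)) * (n:ℂ))
                = ((n:ℂ)⁻¹ * (n:ℂ)⁻¹ * (n:ℂ) * (n:ℂ)) * ∑ s, Q d s e1 * conj (Q d s e2) := by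
                  rw [Finset.mul_sum]
                  exact scongr fun s => by rw [hBB s f1, hHH d a s, if_pos rfl]; ring
              _ = if (e1, f1) = (e2, f1) then 1 else 0 := by
                  rw [hQflip d e1 e2, hc1, one_mul]
                  simp [Prod.ext_iff]
          · simp [hf, Prod.ext_iff]
    exact ⟨huu, mul_eq_one_comm.mp huu⟩

  · obtain ⟨a, b, c, d⟩ := x
    obtain ⟨a', b', c', d'⟩ := y
    simp only [Matrix.trace, Matrix.diag, Matrix.mul_apply, Matrix.conjTranspose_apply,
      Matrix.of_apply, Complex.star_def]
    rw [Fintype.sum_prod_type]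
    simp only [Fintype.sum_prod_type, map_mul, map_sum, map_inv₀, map_natCast]
    simp only [Finset.mul_sum, Finset.sum_mul]
    rw [reorder8]
    trans (∑ s : Fin n, ∑ r : Fin n, ∑ g : Fin n, ∑ e : Fin n, ∑ r' : Fin n, ∑ h' : Fin n,
      ∑ s' : Fin n, ∑ f : Fin n,
      ((n:ℂ)⁻¹ * (n:ℂ)⁻¹ * ((conj (C r h') * C r' h') * (conj (D s r) * D s' r') *
        (conj (H d a s) * H d' a' s') * (conj (K c b r) * K c' b' r') *
        (conj (Q d s e) * Q d' s' e) * (conj (P r c g) * P r' c' g))) *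
        ((conj (A f h') * A f h') * (conj (B s f) * B s' f)))
    · exact scongr fun s => scongr fun r => scongr fun g => scongr fun e =>
        scongr fun r' => scongr fun h' => scongr fun s' => scongr fun f => by ring
    calc (∑ s : Fin n, ∑ r : Fin n, ∑ g : Fin n, ∑ e : Fin n, ∑ r' : Fin n, ∑ h' : Fin n,
          ∑ s' : Fin n, ∑ f : Fin n,
          ((n:ℂ)⁻¹ * (n:ℂ)⁻¹ * ((conj (C r h') * C r' h') * (conj (D s r) * D s' r') *
            (conj (H d a s) * H d' a' s') * (conj (K c b r) * K c' b' r') *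
            (conj (Q d s e) * Q d' s' e) * (conj (P r c g) * P r' c' g))) *
            ((conj (A f h') * A f h') * (conj (B s f) * B s' f)))
        = ∑ s : Fin n, ∑ r : Fin n, ∑ g : Fin n, ∑ e : Fin n, ∑ r' : Fin n, ∑ h' : Fin n,
          ∑ s' : Fin n,
          ((n:ℂ)⁻¹ * (n:ℂ)⁻¹ * ((conj (C r h') * C r' h') * (conj (D s r) * D s' r') *
            (conj (H d a s) * H d' a' s') * (conj (K c b r) * K c' b' r') *
            (conj (Q d s e) * Q d' s' e) * (conj (P r c g) * P r' c' g))) *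
            (if s = s' then (n:ℂ) else 0) :=
        scongr fun s => scongr fun r => scongr fun g => scongr fun e => scongr fun r' =>
          scongr fun h' => scongr fun s' =>
          ((scongr fun f => by rw [hAAc f h']; ring).trans (sum_mul_pair _ _ _ _ (hBrowc s s')))
      _ = ∑ s : Fin n, ∑ r : Fin n, ∑ g : Fin n, ∑ e : Fin n, ∑ r' : Fin n, ∑ h' : Fin n,
          ((n:ℂ)⁻¹ * (n:ℂ)⁻¹ * ((conj (C r h') * C r' h') * (conj (D s r) * D s r') *
            (conj (H d a s) * H d' a' s) * (conj (K c b r) * K c' b' r') *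
            (conj (Q d s e) * Q d' s e) * (conj (P r c g) * P r' c' g))) * (n:ℂ) :=
        scongr fun s => scongr fun r => scongr fun g => scongr fun e => scongr fun r' =>
          scongr fun h' => by
          simp only [mul_ite, mul_one, mul_zero, Finset.sum_ite_eq, Finset.mem_univ, if_true]
      _ = ∑ s : Fin n, ∑ r : Fin n, ∑ g : Fin n, ∑ e : Fin n, ∑ r' : Fin n,
          (((n:ℂ)⁻¹ * (n:ℂ)⁻¹ * ((conj (D s r) * D s r') *
            (conj (H d a s) * H d' a' s) * (conj (K c b r) * K c' b' r') *
            (conj (Q d s e) * Q d' s e) * (conj (P r c g) * P r' c' g))) * (n:ℂ)) *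
            (if r = r' then (n:ℂ) else 0) :=
        scongr fun s => scongr fun r => scongr fun g => scongr fun e => scongr fun r' =>
          ((scongr fun h' => by ring).trans (sum_mul_pair _ _ _ _ (hCrowc r r')))
      _ = ∑ s : Fin n, ∑ r : Fin n, ∑ g : Fin n, ∑ e : Fin n,
          (((n:ℂ)⁻¹ * (n:ℂ)⁻¹ * ((conj (D s r) * D s r) *
            (conj (H d a s) * H d' a' s) * (conj (K c b r) * K c' b' r) *
            (conj (Q d s e) * Q d' s e) * (conj (P r c g) * P r c' g))) * (n:ℂ)) * (n:ℂ) :=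
        scongr fun s => scongr fun r => scongr fun g => scongr fun e => by
          simp only [mul_ite, mul_one, mul_zero, Finset.sum_ite_eq, Finset.mem_univ, if_true]
      _ = ∑ s : Fin n, ∑ r : Fin n, ∑ g : Fin n,
          (((n:ℂ)⁻¹ * (n:ℂ)⁻¹ * ((conj (D s r) * D s r) *
            (conj (H d a s) * H d' a' s) * (conj (K c b r) * K c' b' r) *
            (conj (P r c g) * P r c' g))) * (n:ℂ) * (n:ℂ)) *
            (if d = d' then (1:ℂ) else 0) :=
        scongr fun s => scongr fun r => scongr fun g =>
          ((scongr fun e => by ring).trans (sum_mul_pair _ _ _ _ (hQ.2.2 d d' s)))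
      _ = ∑ s : Fin n, ∑ r : Fin n,
          (((n:ℂ)⁻¹ * (n:ℂ)⁻¹ * ((conj (D s r) * D s r) *
            (conj (H d a s) * H d' a' s) * (conj (K c b r) * K c' b' r))) *
            (n:ℂ) * (n:ℂ) * (if d = d' then (1:ℂ) else 0)) *
            (if c = c' then (1:ℂ) else 0) :=
        scongr fun s => scongr fun r =>
          ((scongr fun g => by ring).trans (sum_mul_pair _ _ _ _ (hP.2.1 r c c')))
      _ = if (a, b, c, d) = (a', b', c', d') then (Fintype.card (Fin n × Fin n) : ℂ) else 0 := by
        by_cases hd : d = d'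
        · by_cases hc : c = c'
          · subst hd; subst hc
            calc (∑ s : Fin n, ∑ r : Fin n,
                (((n:ℂ)⁻¹ * (n:ℂ)⁻¹ * ((conj (D s r) * D s r) *
                  (conj (H d a s) * H d a' s) * (conj (K c b r) * K c b' r))) *
                  (n:ℂ) * (n:ℂ) * (if d = d then (1:ℂ) else 0)) *
                  (if c = c then (1:ℂ) else 0))
                = ∑ s : Fin n, ∑ r : Fin n,
                  ((n:ℂ)⁻¹ * (n:ℂ)⁻¹ * (n:ℂ) * (n:ℂ) * (conj (H d a s) * H d a' s)) *
                  (conj (K c b r) * K c b' r) :=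
                scongr fun s => scongr fun r => by
                  rw [hDDc s r, if_pos rfl, if_pos rfl]; ring
              _ = ∑ s : Fin n,
                  ((n:ℂ)⁻¹ * (n:ℂ)⁻¹ * (n:ℂ) * (n:ℂ) * (conj (H d a s) * H d a' s)) *
                  (if b = b' then (n:ℂ) else 0) :=
                scongr fun s => sum_mul_pair _ _ _ _ (hKrowc c b b')
              _ = ∑ s : Fin n,
                  ((n:ℂ)⁻¹ * (n:ℂ)⁻¹ * (n:ℂ) * (n:ℂ) * (if b = b' then (n:ℂ) else 0)) *
                  (conj (H d a s) * H d a' s) :=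
                scongr fun s => by ring
              _ = ((n:ℂ)⁻¹ * (n:ℂ)⁻¹ * (n:ℂ) * (n:ℂ) * (if b = b' then (n:ℂ) else 0)) *
                  (if a = a' then (n:ℂ) else 0) :=
                sum_mul_pair _ _ _ _ (hHrowc d a a')
              _ = if (a, b, c, d) = (a', b', c, d) then (Fintype.card (Fin n × Fin n) : ℂ)
                  else 0 := by
                by_cases ha : a = a' <;> by_cases hb : b = b' <;>
                  simp [ha, hb, Prod.ext_iff, Fintype.card_prod, Fintype.card_fin] <;>
                  field_simp <;> ring <;> simp
          · simp [hc, Prod.ext_iff]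
        · simp [hd, Prod.ext_iff]
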